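/- Let V be an n-dimensional vector space over a field of characteristic zero and let B₁, …, B_k be bases of V. Then |B₁* + ⋯ + B_k*| ≥ (k+1)^n. -/

import Mathlib

open Finset Pointwise

/-- The subset-sum set of a finite set `B`: all sums `∑_{a ∈ A} a` over `A ⊆ B`. -/
def subsetSums {V : Type*} [AddCommMonoid V] [DecidableEq V] (B : Finset V) : Finset V :=
  B.powerset.image fun A => A.sum id

/- ### Numeric lemmas -/

lemma radon_aux (n : ℕ) {w s : ℝ} (hw : 0 ≤ w) (hs : 0 < s) :
    (w + 1) ^ (n + 1) * s ^ n ≤ (s + 1) ^ n * (w ^ (n + 1) + s ^ n) := by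
  induction n with
  | zero => simp
  | succ m ih =>
    have hQ : (0:ℝ) ≤ (s + 1) ^ m := by positivity
    have h3 : 0 ≤ (w - s) * (w ^ (m + 1) - s ^ m * s) := by
      rcases le_total s w with h | h
      · have h2 : s ^ (m + 1) ≤ w ^ (m + 1) := pow_le_pow_left₀ hs.le h _
        rw [← pow_succ]
        exact mul_nonneg (by linarith) (by linarith)
      · have h2 : w ^ (m + 1) ≤ s ^ (m + 1) := pow_le_pow_left₀ hw h _
        have h4 : 0 ≤ (s - w) * (s ^ (m + 1) - w ^ (m + 1)) :=
          mul_nonneg (by linarith) (by linarith)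
        rw [← pow_succ]
        nlinarith [h4]
    have hmid : s * (w + 1) * (w ^ (m + 1) + s ^ m)
        ≤ (s + 1) * (w ^ (m + 1) * w + s ^ m * s) := by nlinarith [h3]
    calc (w + 1) ^ (m + 2) * s ^ (m + 1)
        = ((w + 1) ^ (m + 1) * s ^ m) * ((w + 1) * s) := by ring
      _ ≤ ((s + 1) ^ m * (w ^ (m + 1) + s ^ m)) * ((w + 1) * s) :=
          mul_le_mul_of_nonneg_right ih (by positivity)
      _ = (s + 1) ^ m * (s * (w + 1) * (w ^ (m + 1) + s ^ m)) := by ring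
      _ ≤ (s + 1) ^ m * ((s + 1) * (w ^ (m + 1) * w + s ^ m * s)) :=
          mul_le_mul_of_nonneg_left hmid hQ
      _ = (s + 1) ^ (m + 1) * (w ^ (m + 2) + s ^ (m + 1)) := by ring

lemma nl_lemma {τ : Type*} (n : ℕ) (L : Finset τ) (a x : τ → ℝ) (t0 : τ) (ht0 : t0 ∈ L)
    (hx : ∀ t ∈ L, 0 < x t) (hax : ∀ t ∈ L, x t ^ n = a t)
    (hmax : ∀ t ∈ L, x t ≤ x t0) :
    ((∑ t ∈ L, a t) ^ (((n + 1 : ℕ) : ℝ))⁻¹ + 1) ^ (n + 1)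
      ≤ (∑ t ∈ L, (x t + 1) ^ n) + (x t0 + 1) ^ n := by
  have hspos : 0 < x t0 := hx t0 ht0
  have hA : 0 < ∑ t ∈ L, a t := by
    refine Finset.sum_pos (fun t ht => ?_) ⟨t0, ht0⟩
    rw [← hax t ht]; exact pow_pos (hx t ht) n
  set s : ℝ := x t0 with hs0
  set A : ℝ := ∑ t ∈ L, a t with hAdef
  set w : ℝ := A ^ (((n + 1 : ℕ) : ℝ))⁻¹ with hwdef
  have hw : 0 ≤ w := Real.rpow_nonneg hA.le _
  have hwp : w ^ (n + 1) = A := Real.rpow_inv_natCast_pow hA.le (Nat.succ_ne_zero n)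
  have hr := radon_aux n hw hspos
  have hterm : ∀ t ∈ L, (s + 1) ^ n * a t ≤ s ^ n * (x t + 1) ^ n := by
    intro t ht
    have h1 : (s + 1) * x t ≤ s * (x t + 1) := by nlinarith [hmax t ht, hx t ht, hspos]
    have hxt := (hx t ht).le
    have h2 := pow_le_pow_left₀ (by nlinarith [hspos.le]) h1 n
    rw [mul_pow, mul_pow] at h2
    calc (s + 1) ^ n * a t = (s + 1) ^ n * x t ^ n := by rw [hax t ht]
      _ ≤ s ^ n * (x t + 1) ^ n := h2
  have hsum : (s + 1) ^ n * A ≤ s ^ n * ∑ t ∈ L, (x t + 1) ^ n := by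
    rw [hAdef, Finset.mul_sum, Finset.mul_sum]
    exact Finset.sum_le_sum hterm
  have final : (w + 1) ^ (n + 1) * s ^ n
      ≤ ((∑ t ∈ L, (x t + 1) ^ n) + (s + 1) ^ n) * s ^ n := by
    calc (w + 1) ^ (n + 1) * s ^ n ≤ (s + 1) ^ n * (w ^ (n + 1) + s ^ n) := hr
      _ = (s + 1) ^ n * A + (s + 1) ^ n * s ^ n := by rw [hwp]; ring
      _ ≤ s ^ n * (∑ t ∈ L, (x t + 1) ^ n) + (s + 1) ^ n * s ^ n := by linarith
      _ = ((∑ t ∈ L, (x t + 1) ^ n) + (s + 1) ^ n) * s ^ n := by ring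
  exact le_of_mul_le_mul_right final (pow_pos hspos n)

/- ### The cube -/

def qcube (F : Type*) [Field F] [DecidableEq F] (n : ℕ) : Finset (Fin n → F) :=
  Fintype.piFinset fun _ => ({0, 1} : Finset F)

lemma mem_qcube {F : Type*} [Field F] [DecidableEq F] {n : ℕ} {f : Fin n → F} :
    f ∈ qcube F n ↔ ∀ j, f j = 0 ∨ f j = 1 := by
  simp [qcube, Fintype.mem_piFinset]

lemma qcube_nonempty {F : Type*} [Field F] [DecidableEq F] (n : ℕ) : (qcube F n).Nonempty :=
  ⟨fun _ => 0, mem_qcube.2 fun _ => Or.inl rfl⟩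

def splitE (F : Type*) [Field F] (n : ℕ) : (Fin (n + 1) → F) ≃+ ((Fin n → F) × F) where
  toFun x := (fun j => x j.castSucc, x (Fin.last n))
  invFun p := Fin.snoc p.1 p.2
  left_inv x := by
    funext j
    refine Fin.lastCases ?_ ?_ j
    · simp
    · intro i; simp
  right_inv p := by
    refine Prod.ext ?_ ?_
    · funext j; simp
    · simp
  map_add' x y := rfl

lemma image_qcube {F : Type*} [Field F] [DecidableEq F] (n : ℕ) :
    (qcube F (n + 1)).image (splitE F n) = (qcube F n) ×ˢ ({0, 1} : Finset F) := by
  classical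
  ext p
  simp only [Finset.mem_image, Finset.mem_product]
  constructor
  · rintro ⟨x, hx, rfl⟩
    rw [mem_qcube] at hx
    refine ⟨mem_qcube.2 fun j => hx _, ?_⟩
    rcases hx (Fin.last n) with h | h <;> simp [splitE, h]
  · rintro ⟨h1, h2⟩
    refine ⟨(splitE F n).symm p, ?_, (splitE F n).apply_symm_apply p⟩
    rw [mem_qcube] at h1 ⊢
    intro j
    refine Fin.lastCases ?_ ?_ j
    · have hval : ((splitE F n).symm p) (Fin.last n) = p.2 := by
        show (Fin.snoc p.1 p.2 : Fin (n+1) → F) (Fin.last n) = p.2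
        exact Fin.snoc_last _ _
      rw [hval]
      simpa using h2
    · intro i
      have hval : ((splitE F n).symm p) i.castSucc = p.1 i := by
        show (Fin.snoc p.1 p.2 : Fin (n+1) → F) i.castSucc = p.1 i
        exact Fin.snoc_castSucc _ _ _
      rw [hval]
      exact h1 i

/- ### Fibers -/

section Fib

variable {F : Type*} [Field F] [DecidableEq F] {β : Type*} [DecidableEq β]

def fib (B : Finset (β × F)) (t : F) : Finset β :=
  (B.filter fun p => p.2 = t).image Prod.fst

lemma card_fib (B : Finset (β × F)) (t : F) :
    (fib B t).card = (B.filter fun p => p.2 = t).card := by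
  apply Finset.card_image_of_injOn
  intro p hp q hq h
  simp only [Finset.coe_filter, Set.mem_setOf_eq] at hp hq
  exact Prod.ext h (hp.2.trans hq.2.symm)

lemma card_eq_sum_fib (B : Finset (β × F)) :
    B.card = ∑ t ∈ B.image Prod.snd, (fib B t).card := by
  rw [Finset.card_eq_sum_card_image Prod.snd]
  exact Finset.sum_congr rfl fun t _ => (card_fib B t).symm

lemma fib_nonempty {B : Finset (β × F)} {t : F} (ht : t ∈ B.image Prod.snd) :
    (fib B t).Nonempty := by
  obtain ⟨p, hp, rfl⟩ := Finset.mem_image.1 ht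
  exact ⟨p.1, Finset.mem_image_of_mem _ (Finset.mem_filter.2 ⟨hp, rfl⟩)⟩

lemma fib_add_subset [AddCommMonoid β] (B : Finset (β × F)) (C : Finset β)
    (D : Finset F) {d : F} (hd : d ∈ D) (t : F) :
    fib B t + C ⊆ fib (B + C ×ˢ D) (t + d) := by
  intro z hz
  rw [Finset.mem_add] at hz
  obtain ⟨b1, hb1, c, hc, rfl⟩ := hz
  obtain ⟨p, hp, hp1⟩ := Finset.mem_image.1 hb1
  rw [Finset.mem_filter] at hp
  refine Finset.mem_image.2 ⟨p + (c, d), ?_, ?_⟩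
  · rw [Finset.mem_filter]
    refine ⟨Finset.add_mem_add hp.1 (Finset.mem_product.2 ⟨hc, hd⟩), ?_⟩
    show p.2 + d = t + d
    rw [hp.2]
  · show p.1 + c = b1 + c
    rw [hp1]

lemma sum_card_fib_le (S : Finset (β × F)) (K : Finset F) :
    ∑ s ∈ K, (fib S s).card ≤ S.card := by
  have h1 : ∀ s ∈ K, (fib S s).card = (S.filter fun p => p.2 = s).card :=
    fun s _ => card_fib S s
  rw [Finset.sum_congr rfl h1, ← Finset.card_biUnion]
  · exact Finset.card_le_card (Finset.biUnion_subset.2 fun s _ => Finset.filter_subset _ _)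
  · intro s _ s' _ hss
    rw [Function.onFun, Finset.disjoint_left]
    rintro p hp hp'
    rw [Finset.mem_filter] at hp hp'
    exact hss (hp.2.symm.trans hp'.2)

end Fib

lemma exists_iota (F : Type*) [Field F] [CharZero F] (t0 : F) :
    ∃ ι : F → F, Function.Injective ι ∧ (∀ t, ι t = t ∨ ι t = t + 1) ∧
      (∀ t, ι t ≠ t0 + 1) := by
  classical
  refine ⟨fun t => if ∃ m : ℕ, t = t0 + ((m + 1 : ℕ) : F) then t + 1 else t, ?_, ?_, ?_⟩
  · intro u v huv
    have hP1 : ∀ t : F, (∃ m : ℕ, t = t0 + ((m + 1 : ℕ) : F)) →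
        (∃ m : ℕ, t + 1 = t0 + ((m + 1 : ℕ) : F)) := by
      rintro t ⟨m, rfl⟩
      exact ⟨m + 1, by push_cast; ring⟩
    by_cases hu : ∃ m : ℕ, u = t0 + ((m + 1 : ℕ) : F) <;>
      by_cases hv : ∃ m : ℕ, v = t0 + ((m + 1 : ℕ) : F) <;>
      simp only [hu, hv, if_pos, if_neg, if_true, if_false] at huv
    · exact add_right_cancel huv
    · exact absurd (huv ▸ hP1 u hu) hv
    · exact absurd (huv.symm ▸ hP1 v hv) hu
    · exact huv
  · intro t
    by_cases ht : ∃ m : ℕ, t = t0 + ((m + 1 : ℕ) : F) <;>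
      simp only [ht, if_true, if_false] <;> tauto
  · intro t
    by_cases ht : ∃ m : ℕ, t = t0 + ((m + 1 : ℕ) : F) <;>
      simp only [ht, if_true, if_false]
    · obtain ⟨m, rfl⟩ := ht
      intro h
      have h3 : ((m + 1 : ℕ) : F) = 0 := by linear_combination h
      exact Nat.succ_ne_zero m (Nat.cast_eq_zero.1 h3)
    · intro h
      exact ht ⟨0, by rw [h]; push_cast; ring⟩

/- ### Main real-valued lemma -/

lemma main_real (F : Type*) [Field F] [CharZero F] [DecidableEq F] :
    ∀ (n : ℕ) (A : Finset (Fin n → F)), A.Nonempty →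
      ((A.card : ℝ) ^ ((n : ℝ))⁻¹ + 1) ^ n ≤ ((A + qcube F n).card : ℝ) := by
  intro n
  induction n with
  | zero =>
    intro A hA
    have h1 : (A + qcube F 0).Nonempty := hA.add (qcube_nonempty 0)
    simpa using (Nat.one_le_cast (α := ℝ)).2 h1.card_pos
  | succ n ih =>
    intro A hA
    classical
    set e := splitE F n with he
    set A' := A.image ⇑e with hA'
    set Qn := qcube F n with hQn
    set S' := A' + Qn ×ˢ ({0, 1} : Finset F) with hS'
    have hcardS : (A + qcube F (n + 1)).card = S'.card := by
      have h1 : (A + qcube F (n + 1)).image ⇑e = S' := by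
        rw [Finset.image_add, image_qcube]
      rw [← h1, Finset.card_image_of_injective _ e.injective]
    have hcardA : A.card = A'.card := (Finset.card_image_of_injective _ e.injective).symm
    set L := A'.image Prod.snd with hL
    have hA'ne : A'.Nonempty := hA.image _
    have hLne : L.Nonempty := hA'ne.image _
    obtain ⟨t0, ht0, hmaxa⟩ := L.exists_max_image (fun t => (fib A' t).card) hLne
    obtain ⟨ι, hinj, hor, hne⟩ := exists_iota F t0
    -- counting inequality over ℕ
    have hcount : (∑ t ∈ L, (fib A' t + Qn).card) + (fib A' t0 + Qn).card ≤ S'.card := by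
      have h1 : ∀ t, (fib A' t + Qn).card ≤ (fib S' (ι t)).card := by
        intro t
        rcases hor t with h | h <;> rw [h]
        · have hsub := fib_add_subset A' Qn ({0, 1} : Finset F)
            (show (0:F) ∈ {0, 1} by simp) t
          rw [add_zero] at hsub
          exact Finset.card_le_card hsub
        · exact Finset.card_le_card
            (fib_add_subset A' Qn ({0, 1} : Finset F) (show (1:F) ∈ {0, 1} by simp) t)
      have h2 : (fib A' t0 + Qn).card ≤ (fib S' (t0 + 1)).card :=
        Finset.card_le_card
          (fib_add_subset A' Qn ({0, 1} : Finset F) (show (1:F) ∈ {0, 1} by simp) t0)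
      have h3 : (∑ t ∈ L, (fib A' t + Qn).card) + (fib A' t0 + Qn).card
          ≤ (∑ t ∈ L, (fib S' (ι t)).card) + (fib S' (t0 + 1)).card :=
        Nat.add_le_add (Finset.sum_le_sum fun t _ => h1 t) h2
      refine h3.trans ?_
      have h4 : ∑ s ∈ L.image ι, (fib S' s).card = ∑ t ∈ L, (fib S' (ι t)).card :=
        Finset.sum_image fun x _ y _ h => hinj h
      have h5 : Disjoint (L.image ι) ({t0 + 1} : Finset F) := by
        rw [Finset.disjoint_singleton_right]
        intro hmem
        obtain ⟨t, _, h⟩ := Finset.mem_image.1 hmem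
        exact hne t h
      calc (∑ t ∈ L, (fib S' (ι t)).card) + (fib S' (t0 + 1)).card
          = ∑ s ∈ L.image ι ∪ {t0 + 1}, (fib S' s).card := by
            rw [Finset.sum_union h5, h4, Finset.sum_singleton]
        _ ≤ S'.card := sum_card_fib_le S' _
    -- real-valued part
    set a : F → ℝ := fun t => ((fib A' t).card : ℝ) with ha
    set x : F → ℝ := fun t => a t ^ ((n : ℝ))⁻¹ with hx
    have hfibne : ∀ t ∈ L, (fib A' t).Nonempty := fun t ht => fib_nonempty ht
    have hapos : ∀ t ∈ L, 0 < a t := fun t ht => Nat.cast_pos.2 (hfibne t ht).card_pos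
    have hxpos : ∀ t ∈ L, 0 < x t := fun t ht => Real.rpow_pos_of_pos (hapos t ht) _
    have hax : ∀ t ∈ L, x t ^ n = a t := by
      intro t ht
      rcases Nat.eq_zero_or_pos n with rfl | hn
      · have hone : (fib A' t).card = 1 := by
          refine le_antisymm (Finset.card_le_one.2 fun p _ q _ => ?_) (hfibne t ht).card_pos
          funext j
          exact j.elim0
        simp [hx, ha, hone]
      · exact Real.rpow_inv_natCast_pow (hapos t ht).le hn.ne'
    have hmax : ∀ t ∈ L, x t ≤ x t0 := by
      intro t ht
      exact Real.rpow_le_rpow (hapos t ht).le (Nat.cast_le.2 (hmaxa t ht)) (by positivity)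
    have hNL := nl_lemma n L a x t0 ht0 hxpos hax hmax
    have hsumA : (A.card : ℝ) = ∑ t ∈ L, a t := by
      rw [hcardA, card_eq_sum_fib A']
      push_cast
      rfl
    have hIH : ∀ t ∈ L, (x t + 1) ^ n ≤ ((fib A' t + Qn).card : ℝ) := by
      intro t ht
      exact ih (fib A' t) (hfibne t ht)
    have hchain : (∑ t ∈ L, (x t + 1) ^ n) + (x t0 + 1) ^ n ≤ (S'.card : ℝ) := by
      have h6 : (∑ t ∈ L, (x t + 1) ^ n) + (x t0 + 1) ^ n
          ≤ (∑ t ∈ L, ((fib A' t + Qn).card : ℝ)) + ((fib A' t0 + Qn).card : ℝ) :=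
        add_le_add (Finset.sum_le_sum hIH) (hIH t0 ht0)
      refine h6.trans ?_
      push_cast [← Nat.cast_sum]
      exact_mod_cast hcount
    rw [hcardS]
    push_cast
    calc ((A.card : ℝ) ^ ((n : ℝ) + 1)⁻¹ + 1) ^ (n + 1)
        = ((∑ t ∈ L, a t) ^ (((n + 1 : ℕ) : ℝ))⁻¹ + 1) ^ (n + 1) := by
          rw [hsumA]; norm_num
      _ ≤ (∑ t ∈ L, (x t + 1) ^ n) + (x t0 + 1) ^ n := hNL
      _ ≤ (S'.card : ℝ) := hchain

/- ### Natural number key lemma -/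

lemma key_nat (F : Type*) [Field F] [CharZero F] [DecidableEq F] (n : ℕ)
    (A : Finset (Fin n → F)) (hA : A.Nonempty) (m : ℕ) (hm : m ^ n ≤ A.card) :
    (m + 1) ^ n ≤ (A + qcube F n).card := by
  rcases Nat.eq_zero_or_pos n with rfl | hn
  · simpa using (hA.add (qcube_nonempty 0)).card_pos
  · have h := main_real F n A hA
    have h1 : (m : ℝ) ≤ (A.card : ℝ) ^ ((n : ℝ))⁻¹ := by
      calc (m : ℝ) = ((m : ℝ) ^ n) ^ ((n : ℝ))⁻¹ :=
            (Real.pow_rpow_inv_natCast (by positivity) hn.ne').symm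
        _ ≤ ((A.card : ℝ)) ^ ((n : ℝ))⁻¹ := by
            apply Real.rpow_le_rpow (by positivity) ?_ (by positivity)
            exact_mod_cast hm
    have h2 : ((m : ℝ) + 1) ^ n ≤ ((A + qcube F n).card : ℝ) :=
      le_trans (pow_le_pow_left₀ (by positivity) (by linarith) n) h
    exact_mod_cast h2

/- ### Transport through additive maps -/

lemma subsetSums_image {V W : Type*} [AddCommMonoid V] [AddCommMonoid W] [DecidableEq V]
    [DecidableEq W] (f : V →+ W) (hf : Function.Injective f) (B : Finset V) :
    (subsetSums B).image f = subsetSums (B.image f) := by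
  unfold subsetSums
  ext w
  simp only [Finset.mem_image, Finset.mem_powerset]
  constructor
  · rintro ⟨w', ⟨A, hA, rfl⟩, rfl⟩
    refine ⟨A.image f, ⟨Finset.image_subset_image hA, ?_⟩⟩
    rw [Finset.sum_image fun x _ y _ h => hf h]
    simp [map_sum]
  · rintro ⟨A', ⟨hA', rfl⟩⟩
    obtain ⟨A, hAB, rfl⟩ := Finset.subset_image_iff.1 hA'
    refine ⟨A.sum id, ⟨A, hAB, rfl⟩, ?_⟩
    rw [Finset.sum_image fun x _ y _ h => hf h]
    simp [map_sum]

lemma subsetSums_singles (F : Type*) [Field F] [DecidableEq F] (n : ℕ) :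
    subsetSums ((Finset.univ : Finset (Fin n)).image
      fun i => (fun j => if i = j then (1 : F) else 0)) = qcube F n := by
  classical
  set δ : Fin n → (Fin n → F) := fun i => (fun j => if i = j then (1 : F) else 0) with hδ
  have hδinj : Function.Injective δ := by
    intro i i' h
    have := congrFun h i
    simp only [hδ, if_pos rfl] at this
    by_contra hne
    rw [if_neg (fun hc => hne hc.symm)] at this
    exact one_ne_zero (α := F) this
  have hsum : ∀ J : Finset (Fin n), (J.image δ).sum id = fun j => if j ∈ J then (1 : F) else 0 := by
    intro J
    rw [Finset.sum_image fun x _ y _ h => hδinj h]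
    funext j
    rw [Finset.sum_apply]
    simp only [hδ, id]
    exact Finset.sum_ite_eq' J j (fun _ => (1 : F))
  ext f
  unfold subsetSums
  simp only [Finset.mem_image, Finset.mem_powerset]
  constructor
  · rintro ⟨A, hA, rfl⟩
    obtain ⟨J, _, rfl⟩ := Finset.subset_image_iff.1 hA
    rw [hsum J, mem_qcube]
    intro j
    by_cases hj : j ∈ J <;> simp [hj]
  · intro hf
    rw [mem_qcube] at hf
    set J : Finset (Fin n) := Finset.univ.filter (fun j => f j = 1) with hJ
    refine ⟨J.image δ, Finset.image_subset_image (Finset.subset_univ J), ?_⟩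
    rw [hsum J]
    funext j
    rcases hf j with h | h
    · rw [if_neg, h]
      simp only [hJ, Finset.mem_filter]
      rintro ⟨-, h1⟩
      rw [h] at h1
      exact one_ne_zero h1.symm
    · rw [if_pos, h]
      simp only [hJ, Finset.mem_filter]
      exact ⟨Finset.mem_univ j, h⟩

lemma keyV {F V : Type*} [Field F] [CharZero F] [AddCommGroup V] [Module F V] [DecidableEq V]
    (n : ℕ) (hV : Module.finrank F V = n) (Bb : Finset V)
    (hli : LinearIndependent F ((↑) : ↥(Bb : Set V) → V))
    (hsp : Submodule.span F ((Bb : Set V)) = ⊤)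
    (X : Finset V) (hX : X.Nonempty) (m : ℕ) (hm : m ^ n ≤ X.card) :
    (m + 1) ^ n ≤ (X + subsetSums Bb).card := by
  classical
  letI : DecidableEq F := Classical.decEq F
  set b : Module.Basis ↥(Bb : Set V) F V :=
    Module.Basis.mk hli (by rw [Subtype.range_coe]; exact hsp.ge) with hb
  have hcard : Fintype.card ↥(Bb : Set V) = n := by
    rw [← hV]
    exact (Module.finrank_eq_card_basis b).symm
  set eqv : ↥(Bb : Set V) ≃ Fin n := Fintype.equivFinOfCardEq hcard with heqv
  set c : Module.Basis (Fin n) F V := b.reindex eqv with hc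
  set φ : V ≃ₗ[F] (Fin n → F) := c.equivFun with hφ
  set f : V →+ (Fin n → F) := φ.toLinearMap.toAddMonoidHom with hf
  have hfc : ∀ v : V, f v = φ v := fun v => rfl
  have hfinj : Function.Injective f := φ.injective
  have himg : (X + subsetSums Bb).card = (X.image f + subsetSums (Bb.image f)).card := by
    rw [← subsetSums_image f hfinj, ← Finset.image_add]
    exact (Finset.card_image_of_injective _ hfinj).symm
  have hci : ∀ i : Fin n, f (c i) = fun j => if i = j then (1 : F) else 0 := by
    intro i
    funext j
    rw [hfc]
    show c.equivFun (c i) j = _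
    rw [Module.Basis.equivFun_self]
  have hmem : ∀ i : Fin n, c i ∈ Bb := by
    intro i
    rw [hc, Module.Basis.reindex_apply, hb, Module.Basis.mk_apply]
    exact (eqv.symm i).2
  have hBb : Bb.image f = (Finset.univ : Finset (Fin n)).image
      fun i => (fun j => if i = j then (1 : F) else 0) := by
    ext y
    simp only [Finset.mem_image, Finset.mem_univ, true_and]
    constructor
    · rintro ⟨v, hv, rfl⟩
      refine ⟨eqv ⟨v, hv⟩, ?_⟩
      rw [← hci]
      congr 1
      rw [hc, Module.Basis.reindex_apply, Equiv.symm_apply_apply, hb, Module.Basis.mk_apply]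
    · rintro ⟨i, rfl⟩
      exact ⟨c i, hmem i, hci i⟩
  rw [himg, hBb, subsetSums_singles]
  refine key_nat F n (X.image f) (hX.image f) m ?_
  rwa [Finset.card_image_of_injective _ hfinj]

theorem stmt8 {F V : Type*} [Field F] [CharZero F] [AddCommGroup V] [Module F V]
    [DecidableEq V] (n : ℕ) (hV : Module.finrank F V = n)
    (k : ℕ) (B : Fin k → Finset V)
    (hB : ∀ i, LinearIndependent F ((↑) : ↥(B i : Set V) → V) ∧
            Submodule.span F ((B i : Set V)) = ⊤) :
    (k + 1) ^ n ≤ (∑ i, subsetSums (B i)).card := by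
  induction k with
  | zero =>
    simp only [Finset.univ_eq_empty, Finset.sum_empty, zero_add, one_pow]
    show 1 ≤ ({0} : Finset V).card
    simp
  | succ k ih =>
    rw [Fin.sum_univ_castSucc]
    have ih' := ih (fun i => B i.castSucc) (fun i => hB i.castSucc)
    have hne : (∑ i : Fin k, subsetSums (B i.castSucc)).Nonempty :=
      Finset.card_pos.1 (lt_of_lt_of_le (pow_pos (Nat.succ_pos k) n) ih')
    exact keyV n hV (B (Fin.last k)) (hB (Fin.last k)).1 (hB (Fin.last k)).2 _ hne (k + 1) ih'
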